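/- Let W ⊆ ℂ⁵ be a 2-dimensional linear subspace such that v_0⁴ + v_1⁴ + v_2⁴ + v_3⁴ + v_4⁴ = 0 for every vector v = (v_0, v_1, v_2, v_3, v_4) ∈ W. Then there exist distinct indices i, j ∈ {0, 1, 2, 3, 4} and ζ ∈ ℂ with ζ⁴ = −1 such that w_i = ζ·w_j for every w ∈ W. -/

import Mathlib

open Finset Matrix in
lemma vand_indep {m : ℕ} (hm : m ≤ 5) (y : Fin m → ℂ) (hy : Function.Injective y)
    (γ : Fin m → ℂ) (h : ∀ k : ℕ, k ≤ 4 → ∑ j, γ j * y j ^ k = 0) : ∀ j, γ j = 0 := by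
  set M : Matrix (Fin m) (Fin m) ℂ := (Matrix.vandermonde y)ᵀ with hM
  have hdet : M.det ≠ 0 := by
    rw [Matrix.det_transpose, Matrix.det_vandermonde]
    refine Finset.prod_ne_zero_iff.2 fun i _ => Finset.prod_ne_zero_iff.2 fun j hj => ?_
    have : i ≠ j := (Finset.mem_Ioi.1 hj).ne
    exact sub_ne_zero_of_ne fun e => this (hy e).symm
  have hmv : M.mulVec γ = 0 := by
    funext k
    have hk : (k : ℕ) ≤ 4 := by omega
    have := h k hk
    simpa [Matrix.mulVec, dotProduct, M, Matrix.vandermonde, mul_comm] using this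
  have : γ = 0 := by
    have h1 : M⁻¹.mulVec (M.mulVec γ) = γ := by
      rw [Matrix.mulVec_mulVec, Matrix.nonsing_inv_mul M (isUnit_iff_ne_zero.2 hdet),
        Matrix.one_mulVec]
    rw [hmv] at h1
    simpa using h1.symm
  intro j; rw [this]; rfl

open Finset in
lemma core (u v : Fin 5 → ℂ)
    (hind : ∀ c : ℂ, u ≠ c • v)
    (hnorm : ∀ i, u i ≠ 0 → v i ≠ 0)
    (he : ∀ k : ℕ, k ≤ 4 → ∑ i, u i ^ k * v i ^ (4 - k) = 0) :
    ∃ i j, i ≠ j ∧ ∃ ζ : ℂ, ζ ^ 4 = -1 ∧ u i = ζ * u j ∧ v i = ζ * v j := by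
  classical
  obtain ⟨ζ₀, hζ₀⟩ := IsAlgClosed.exists_pow_nat_eq (-1 : ℂ) (n := 4) (by norm_num)
  set Z : Finset (Fin 5) := Finset.univ.filter (fun i => v i = 0) with hZdef
  by_cases hZ : 2 ≤ Z.card
  · obtain ⟨i, hi, j, hj, hij⟩ := Finset.one_lt_card.1 hZ
    have hvi : v i = 0 := (Finset.mem_filter.1 hi).2
    have hvj : v j = 0 := (Finset.mem_filter.1 hj).2
    have hui : u i = 0 := by by_contra h; exact hnorm i h hvi
    have huj : u j = 0 := by by_contra h; exact hnorm j h hvj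
    exact ⟨i, j, hij, ζ₀, hζ₀, by simp [hui, huj, hvi, hvj]⟩
  · push_neg at hZ
    set N : Finset (Fin 5) := Finset.univ.filter (fun i => v i ≠ 0) with hNdef
    have hNcard : 4 ≤ N.card := by
      have h5 : Z.card + N.card = 5 := by
        simpa [hZdef, hNdef, Ne] using Finset.card_filter_add_card_filter_not
          (s := (Finset.univ : Finset (Fin 5))) (p := fun i => v i = 0)
      omega
    have hN5 : N.card ≤ 5 := le_trans (Finset.card_le_card (Finset.subset_univ N)) (by simp)
    set x : Fin 5 → ℂ := fun i => u i / v i with hxdef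
    set Y : Finset ℂ := N.image x with hYdef
    set γf : ℂ → ℂ := fun c => ∑ i ∈ N.filter (fun i => x i = c), v i ^ 4 with hγdef
    -- step 1
    have step1 : ∀ k : ℕ, k ≤ 4 → ∑ i ∈ N, v i ^ 4 * x i ^ k = 0 := by
      intro k hk
      have h1 : ∀ i ∈ N, v i ^ 4 * x i ^ k = u i ^ k * v i ^ (4 - k) := by
        intro i hi
        have hv : v i ≠ 0 := (Finset.mem_filter.1 hi).2
        have hv4 : v i ^ 4 = v i ^ k * v i ^ (4 - k) := by rw [← pow_add]; congr 1; omega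
        have hx : x i ^ k = u i ^ k / v i ^ k := by rw [hxdef]; exact div_pow _ _ _
        rw [hx, hv4]
        field_simp
      rw [Finset.sum_congr rfl h1]
      rw [← he k hk]
      refine Finset.sum_subset (Finset.subset_univ N) fun i _ hiN => ?_
      have hvz : v i = 0 := by
        by_contra h
        exact hiN (Finset.mem_filter.2 ⟨Finset.mem_univ i, h⟩)
      have huz : u i = 0 := by by_contra h; exact hnorm i h hvz
      rcases Nat.eq_zero_or_pos k with h0 | h0
      · subst h0; simp [hvz]
      · simp [huz, zero_pow (by omega : k ≠ 0)]
    -- key identity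
    have hkey : ∀ k : ℕ, k ≤ 4 → ∑ c ∈ Y, γf c * c ^ k = 0 := by
      intro k hk
      have : ∑ c ∈ Y, γf c * c ^ k
          = ∑ c ∈ Y, ∑ i ∈ N.filter (fun i => x i = c), v i ^ 4 * x i ^ k := by
        refine Finset.sum_congr rfl fun c hc => ?_
        rw [hγdef]
        rw [Finset.sum_mul]
        refine Finset.sum_congr rfl fun i hi => ?_
        rw [(Finset.mem_filter.1 hi).2]
      rw [this,
        Finset.sum_fiberwise_of_maps_to (fun i hi => Finset.mem_image_of_mem x hi)]
      exact step1 k hk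
    -- Vandermonde
    have hYle : Y.card ≤ 5 := le_trans (Finset.card_image_le) hN5
    set e : Fin Y.card ≃ Y := Y.equivFin.symm with hedef
    have hγY : ∀ c ∈ Y, γf c = 0 := by
      have h0 := vand_indep hYle (fun j => ((e j : Y) : ℂ))
        (Subtype.coe_injective.comp e.injective) (fun j => γf ((e j : Y) : ℂ))
        (fun k hk => by
          rw [← hkey k hk, ← Finset.sum_coe_sort Y (fun c => γf c * c ^ k)]
          exact Fintype.sum_equiv e _ _ (fun j => rfl))
      intro c hc
      have := h0 (e.symm ⟨c, hc⟩)
      simpa using this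
    -- fibers have card ≥ 2
    have hfib2 : ∀ c ∈ Y, 2 ≤ (N.filter (fun i => x i = c)).card := by
      intro c hc
      obtain ⟨i, hiN, hxi⟩ := Finset.mem_image.1 hc
      have hiF : i ∈ N.filter (fun i => x i = c) := Finset.mem_filter.2 ⟨hiN, hxi⟩
      by_contra hlt
      push_neg at hlt
      have h1 : (N.filter (fun i => x i = c)).card = 1 :=
        le_antisymm (by omega) (Finset.card_pos.2 ⟨i, hiF⟩)
      obtain ⟨a, ha⟩ := Finset.card_eq_one.1 h1
      have hia : i = a := by
        have := hiF; rw [ha] at this; exact Finset.mem_singleton.1 this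
      have hγc := hγY c hc
      simp only [hγdef] at hγc
      simp only [ha, Finset.sum_singleton] at hγc
      have : v a = 0 := by
        have := pow_eq_zero_iff (n := 4) (by norm_num) |>.1 hγc
        exact this
      exact (Finset.mem_filter.1 hiN).2 (hia ▸ this)
    have hsum : ∑ c ∈ Y, (N.filter (fun i => x i = c)).card = N.card :=
      (Finset.card_eq_sum_card_fiberwise (fun i hi => Finset.mem_image_of_mem x hi)).symm
    have hY2 : 2 ≤ Y.card := by
      by_contra h
      push_neg at h
      have hNne : N.Nonempty := Finset.card_pos.1 (by omega)
      obtain ⟨i0, hi0⟩ := hNne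
      have hone : ∀ a ∈ Y, ∀ b ∈ Y, a = b := Finset.card_le_one.1 (by omega)
      refine hind (x i0) (funext fun i => ?_)
      by_cases hvi : v i = 0
      · have hui : u i = 0 := by by_contra h'; exact hnorm i h' hvi
        simp [hui, hvi]
      · have hiN : i ∈ N := Finset.mem_filter.2 ⟨Finset.mem_univ i, hvi⟩
        have hxx : x i = x i0 :=
          hone _ (Finset.mem_image_of_mem x hiN) _ (Finset.mem_image_of_mem x hi0)
        have : u i = x i0 * v i := by
          rw [← hxx, hxdef]
          field_simp
        simpa using this
    have hex : ∃ c ∈ Y, (N.filter (fun i => x i = c)).card = 2 := by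
      by_contra h
      push_neg at h
      have h3 : ∀ c ∈ Y, 3 ≤ (N.filter (fun i => x i = c)).card := by
        intro c hc
        have := hfib2 c hc
        have := h c hc
        omega
      have hle := Finset.card_nsmul_le_sum Y (fun c => (N.filter (fun i => x i = c)).card) 3 h3
      rw [hsum] at hle
      simp only [smul_eq_mul] at hle
      omega
    obtain ⟨c, hcY, hc2⟩ := hex
    obtain ⟨i, j, hij, hfe⟩ := Finset.card_eq_two.1 hc2
    have hi : i ∈ N.filter (fun i => x i = c) := by rw [hfe]; simp
    have hj : j ∈ N.filter (fun i => x i = c) := by rw [hfe]; simp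
    have hiN := (Finset.mem_filter.1 hi).1
    have hjN := (Finset.mem_filter.1 hj).1
    have hxi : x i = c := (Finset.mem_filter.1 hi).2
    have hxj : x j = c := (Finset.mem_filter.1 hj).2
    have hvi : v i ≠ 0 := (Finset.mem_filter.1 hiN).2
    have hvj : v j ≠ 0 := (Finset.mem_filter.1 hjN).2
    have hγc := hγY c hcY
    simp only [hγdef] at hγc
    rw [hfe, Finset.sum_pair hij] at hγc
    refine ⟨i, j, hij, v i / v j, ?_, ?_, (div_mul_cancel₀ _ hvj).symm⟩
    · rw [div_pow, div_eq_iff (pow_ne_zero _ hvj)]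
      linear_combination hγc
    · have hxx : u i / v i = u j / v j := by
        have h1 : x i = u i / v i := rfl
        have h2 : x j = u j / v j := rfl
        rw [← h1, ← h2, hxi, hxj]
      rw [div_eq_div_iff hvi hvj] at hxx
      rw [div_mul_eq_mul_div, eq_div_iff hvj]
      linear_combination hxx


/-- Every 2-dimensional linear subspace of `ℂ⁵` on which `v₀⁴ + ⋯ + v₄⁴` vanishes
identically is contained in a hyperplane `x i = ζ x j` with `ζ⁴ = -1`. -/
theorem stmt_12 (W : Submodule ℂ (Fin 5 → ℂ)) (hW : Module.finrank ℂ W = 2)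
    (hq : ∀ v ∈ W, ∑ i : Fin 5, v i ^ 4 = 0) :
    ∃ i j : Fin 5, i ≠ j ∧ ∃ ζ : ℂ, ζ ^ 4 = -1 ∧ ∀ w ∈ W, w i = ζ * w j := by
  classical
  let b : Module.Basis (Fin 2) ℂ W := Module.finBasisOfFinrankEq ℂ W hW
  set u0 : Fin 5 → ℂ := ((b 0 : W) : Fin 5 → ℂ) with hu0def
  set v0 : Fin 5 → ℂ := ((b 1 : W) : Fin 5 → ℂ) with hv0def
  have hu0W : u0 ∈ W := (b 0).2
  have hv0W : v0 ∈ W := (b 1).2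
  -- linear independence of u0, v0 as a pair
  have hli : LinearIndependent ℂ (fun i : Fin 2 => ((b i : W) : Fin 5 → ℂ)) :=
    b.linearIndependent.map' W.subtype (Submodule.ker_subtype W)
  have hpair : ∀ s t : ℂ, s • u0 + t • v0 = 0 → s = 0 ∧ t = 0 := by
    intro s t hst
    have := Fintype.linearIndependent_iff.1 hli ![s, t] ?_
    · exact ⟨this 0, this 1⟩
    · rw [Fin.sum_univ_two]
      simp only [Matrix.cons_val_zero, Matrix.cons_val_one, Matrix.head_cons]
      exact hst
  -- span
  have hspan : ∀ w ∈ W, ∃ a c : ℂ, w = a • u0 + c • v0 := by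
    intro w hw
    refine ⟨b.repr ⟨w, hw⟩ 0, b.repr ⟨w, hw⟩ 1, ?_⟩
    have h1 := b.sum_repr ⟨w, hw⟩
    have h2 := congrArg (fun z : W => (z : Fin 5 → ℂ)) h1
    simp only [Fin.sum_univ_two, Submodule.coe_add, Submodule.coe_smul] at h2
    exact h2.symm
  -- shear
  obtain ⟨t, ht⟩ := Infinite.exists_notMem_finset
    (Finset.univ.image (fun i : Fin 5 => -(v0 i) / u0 i))
  set v1 : Fin 5 → ℂ := v0 + t • u0 with hv1def
  have hv1W : v1 ∈ W := W.add_mem hv0W (W.smul_mem _ hu0W)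
  have hnorm : ∀ i, u0 i ≠ 0 → v1 i ≠ 0 := by
    intro i hu hv
    have hveq : v0 i + t * u0 i = 0 := by
      simpa [hv1def, Pi.add_apply, Pi.smul_apply, smul_eq_mul] using hv
    have : t = -(v0 i) / u0 i := by
      rw [eq_div_iff hu]; linear_combination hveq
    exact ht (Finset.mem_image.2 ⟨i, Finset.mem_univ i, this.symm⟩)
  have hind : ∀ c : ℂ, u0 ≠ c • v1 := by
    intro c h
    have hcomb : (1 - c * t) • u0 + (-c) • v0 = 0 := by
      funext i
      have := congrFun h i
      simp only [hv1def, Pi.add_apply, Pi.smul_apply, Pi.zero_apply, smul_eq_mul] at this ⊢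
      linear_combination this
    obtain ⟨h1, h2⟩ := hpair _ _ hcomb
    rw [show c = 0 by linear_combination -h2] at h1
    norm_num at h1
  -- moments
  have hst : ∀ s t' : ℂ, ∑ i, (s * u0 i + t' * v1 i) ^ 4 = 0 := by
    intro s t'
    have hmem : s • u0 + t' • v1 ∈ W := W.add_mem (W.smul_mem _ hu0W) (W.smul_mem _ hv1W)
    simpa [Pi.add_apply, Pi.smul_apply, smul_eq_mul] using hq _ hmem
  set e : ℕ → ℂ := fun k => ∑ i : Fin 5, u0 i ^ k * v1 i ^ (4 - k) with hedef
  have hexp : ∀ s t' : ℂ,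
      s ^ 4 * e 4 + 4 * s ^ 3 * t' * e 3 + 6 * s ^ 2 * t' ^ 2 * e 2
        + 4 * s * t' ^ 3 * e 1 + t' ^ 4 * e 0 = 0 := by
    intro s t'
    have h1 : ∑ i, (s * u0 i + t' * v1 i) ^ 4
        = s ^ 4 * e 4 + 4 * s ^ 3 * t' * e 3 + 6 * s ^ 2 * t' ^ 2 * e 2
          + 4 * s * t' ^ 3 * e 1 + t' ^ 4 * e 0 := by
      simp only [hedef]
      rw [Finset.mul_sum, Finset.mul_sum, Finset.mul_sum, Finset.mul_sum, Finset.mul_sum,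
        ← Finset.sum_add_distrib, ← Finset.sum_add_distrib, ← Finset.sum_add_distrib,
        ← Finset.sum_add_distrib]
      refine Finset.sum_congr rfl fun i _ => ?_
      norm_num
      ring
    rw [← h1]; exact hst s t'
  have he4 : e 4 = 0 := by linear_combination hexp 1 0
  have he0 : e 0 = 0 := by linear_combination hexp 0 1
  have he2 : e 2 = 0 := by
    linear_combination (1/12 : ℂ) * hexp 1 1 + (1/12 : ℂ) * hexp 1 (-1)
      - (1/6 : ℂ) * he4 - (1/6 : ℂ) * he0
  have he1 : e 1 = 0 := by
    linear_combination (1/3 : ℂ) * hexp 1 1 - (1/24 : ℂ) * hexp 2 1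
      + (1/3 : ℂ) * he4 - he2 - (7/24 : ℂ) * he0
  have he3 : e 3 = 0 := by
    linear_combination (1/8 : ℂ) * hexp 1 1 - (1/8 : ℂ) * hexp 1 (-1) - he1
  have he : ∀ k : ℕ, k ≤ 4 → ∑ i, u0 i ^ k * v1 i ^ (4 - k) = 0 := by
    intro k hk
    interval_cases k
    · exact he0
    · exact he1
    · exact he2
    · exact he3
    · exact he4
  obtain ⟨i, j, hij, ζ, hζ, hui, hvi1⟩ := core u0 v1 hind hnorm he
  have hv0ij : v0 i = ζ * v0 j := by
    have h' : v0 i + t * u0 i = ζ * (v0 j + t * u0 j) := by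
      simpa [hv1def, Pi.add_apply, Pi.smul_apply, smul_eq_mul] using hvi1
    linear_combination h' - t * hui
  refine ⟨i, j, hij, ζ, hζ, fun w hw => ?_⟩
  obtain ⟨a, c, hw'⟩ := hspan w hw
  rw [hw']
  simp only [Pi.add_apply, Pi.smul_apply, smul_eq_mul]
  linear_combination a * hui + c * hv0ij
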